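/- Let N be the additive subgroup of ℚ³ generated by the three standard basis vectors e₁, e₂, e₃ together with v₁ = (1/14, 9/14, 11/14), and let M = {x ∈ N : all three coordinates of x are ≥ 0}. Set v₂ = (1/14)(2,4,8), v₄ = (1/14)(4,8,2), v₆ = (1/14)(6,12,10), v₈ = (1/14)(8,2,4), v₁₀ = (1/14)(10,6,12), v₁₂ = (1/14)(12,10,6) (each of which lies in M). Then v₆ = v₂ + v₄, v₁₀ = v₂ + v₈, v₁₂ = v₄ + v₈, and consequently the six elements v₆, v₁₀, v₁₂, e₁ + v₄, e₂ + v₂, e₃ + v₈ are each the sum of two nonzero elements of M, hence none of them belongs to the Hilbert basis of the cone (ℝ≥0)³ with respect to N. -/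

import Mathlib

theorem stmt_12 (v₁ v₂ v₄ v₆ v₈ v₁₀ v₁₂ : Fin 3 → ℚ)
    (hv₁ : v₁ = ![1/14, 9/14, 11/14])
    (hv₂ : v₂ = ![2/14, 4/14, 8/14])
    (hv₄ : v₄ = ![4/14, 8/14, 2/14])
    (hv₆ : v₆ = ![6/14, 12/14, 10/14])
    (hv₈ : v₈ = ![8/14, 2/14, 4/14])
    (hv₁₀ : v₁₀ = ![10/14, 6/14, 12/14])
    (hv₁₂ : v₁₂ = ![12/14, 10/14, 6/14])
    (N : AddSubgroup (Fin 3 → ℚ))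
    (hN : N = AddSubgroup.closure
      {Pi.single 0 1, Pi.single 1 1, Pi.single 2 1, v₁})
    (M : Set (Fin 3 → ℚ)) (hM : M = {x | x ∈ N ∧ ∀ i, 0 ≤ x i}) :
    v₂ ∈ M ∧ v₄ ∈ M ∧ v₆ ∈ M ∧ v₈ ∈ M ∧ v₁₀ ∈ M ∧ v₁₂ ∈ M ∧
    v₆ = v₂ + v₄ ∧ v₁₀ = v₂ + v₈ ∧ v₁₂ = v₄ + v₈ ∧
    (∀ x ∈ ({v₆, v₁₀, v₁₂, Pi.single 0 1 + v₄, Pi.single 1 1 + v₂,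
        Pi.single 2 1 + v₈} : Set (Fin 3 → ℚ)),
      (∃ y ∈ M, ∃ z ∈ M, y ≠ 0 ∧ z ≠ 0 ∧ x = y + z) ∧
      x ∉ {x ∈ M | x ≠ 0 ∧ ¬ ∃ y ∈ M, ∃ z ∈ M, y ≠ 0 ∧ z ≠ 0 ∧ x = y + z}) := by
  -- generators are in N
  have he1 : Pi.single 0 1 ∈ N := by
    rw [hN]; exact AddSubgroup.subset_closure (by simp)
  have he2 : Pi.single 1 1 ∈ N := by
    rw [hN]; exact AddSubgroup.subset_closure (by simp)
  have he3 : Pi.single 2 1 ∈ N := by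
    rw [hN]; exact AddSubgroup.subset_closure (by simp)
  have hv1N : v₁ ∈ N := by
    rw [hN]; exact AddSubgroup.subset_closure (by simp)
  have key : ∀ (v : Fin 3 → ℚ) (k a b : ℤ),
      v = (k : ℚ) • v₁ - (a : ℚ) • (Pi.single 1 1 : Fin 3 → ℚ) - (b : ℚ) • (Pi.single 2 1 : Fin 3 → ℚ) →
      v ∈ N := by
    intro v k a b hv
    rw [hv]
    refine sub_mem (sub_mem ?_ ?_) ?_
    · rw [Int.cast_smul_eq_zsmul]; exact zsmul_mem hv1N k
    · rw [Int.cast_smul_eq_zsmul]; exact zsmul_mem he2 a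
    · rw [Int.cast_smul_eq_zsmul]; exact zsmul_mem he3 b
  have hs1 : (Pi.single 1 1 : Fin 3 → ℚ) = ![0,1,0] := by
    funext i; fin_cases i <;> simp [Pi.single_apply]
  have hs2 : (Pi.single 2 1 : Fin 3 → ℚ) = ![0,0,1] := by
    funext i; fin_cases i <;> simp [Pi.single_apply]
  have eqn : ∀ (v : Fin 3 → ℚ) (k a b : ℤ), v 0 = (k : ℚ)/14 →
      v 1 = (9 * k : ℚ)/14 - a → v 2 = (11 * k : ℚ)/14 - b →
      v = (k : ℚ) • v₁ - (a : ℚ) • (Pi.single 1 1 : Fin 3 → ℚ) - (b : ℚ) • (Pi.single 2 1 : Fin 3 → ℚ) := by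
    intro v k a b h0 h1 h2
    funext i
    fin_cases i <;>
      simp [hv₁, hs1, hs2, h0, h1, h2] <;> ring
  have hv2N : v₂ ∈ N := key v₂ 2 1 1 (eqn _ _ _ _ (by norm_num [hv₂, Matrix.cons_val_two]) (by norm_num [hv₂, Matrix.cons_val_two]) (by norm_num [hv₂, Matrix.cons_val_two]))
  have hv4N : v₄ ∈ N := key v₄ 4 2 3 (eqn _ _ _ _ (by norm_num [hv₄, Matrix.cons_val_two]) (by norm_num [hv₄, Matrix.cons_val_two]) (by norm_num [hv₄, Matrix.cons_val_two]))
  have hv6N : v₆ ∈ N := key v₆ 6 3 4 (eqn _ _ _ _ (by norm_num [hv₆, Matrix.cons_val_two]) (by norm_num [hv₆, Matrix.cons_val_two]) (by norm_num [hv₆, Matrix.cons_val_two]))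
  have hv8N : v₈ ∈ N := key v₈ 8 5 6 (eqn _ _ _ _ (by norm_num [hv₈, Matrix.cons_val_two]) (by norm_num [hv₈, Matrix.cons_val_two]) (by norm_num [hv₈, Matrix.cons_val_two]))
  have hv10N : v₁₀ ∈ N := key v₁₀ 10 6 7 (eqn _ _ _ _ (by norm_num [hv₁₀, Matrix.cons_val_two]) (by norm_num [hv₁₀, Matrix.cons_val_two]) (by norm_num [hv₁₀, Matrix.cons_val_two]))
  have hv12N : v₁₂ ∈ N := key v₁₂ 12 7 9 (eqn _ _ _ _ (by norm_num [hv₁₂, Matrix.cons_val_two]) (by norm_num [hv₁₂, Matrix.cons_val_two]) (by norm_num [hv₁₂, Matrix.cons_val_two]))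
  have pos : ∀ (v : Fin 3 → ℚ), (∀ i, 0 ≤ v i) ↔ (0 ≤ v 0 ∧ 0 ≤ v 1 ∧ 0 ≤ v 2) := by
    intro v
    constructor
    · intro h; exact ⟨h 0, h 1, h 2⟩
    · rintro ⟨h0, h1, h2⟩ i; fin_cases i <;> assumption
  have hv2M : v₂ ∈ M := by rw [hM]; exact ⟨hv2N, (pos _).2 (by norm_num [hv₂, Matrix.cons_val_two])⟩
  have hv4M : v₄ ∈ M := by rw [hM]; exact ⟨hv4N, (pos _).2 (by norm_num [hv₄, Matrix.cons_val_two])⟩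
  have hv6M : v₆ ∈ M := by rw [hM]; exact ⟨hv6N, (pos _).2 (by norm_num [hv₆, Matrix.cons_val_two])⟩
  have hv8M : v₈ ∈ M := by rw [hM]; exact ⟨hv8N, (pos _).2 (by norm_num [hv₈, Matrix.cons_val_two])⟩
  have hv10M : v₁₀ ∈ M := by rw [hM]; exact ⟨hv10N, (pos _).2 (by norm_num [hv₁₀, Matrix.cons_val_two])⟩
  have hv12M : v₁₂ ∈ M := by rw [hM]; exact ⟨hv12N, (pos _).2 (by norm_num [hv₁₂, Matrix.cons_val_two])⟩
  have he1M : Pi.single (0 : Fin 3) (1:ℚ) ∈ M := by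
    rw [hM]; exact ⟨he1, fun i => by fin_cases i <;> simp [Pi.single_apply]⟩
  have he2M : Pi.single (1 : Fin 3) (1:ℚ) ∈ M := by
    rw [hM]; exact ⟨he2, fun i => by fin_cases i <;> simp [Pi.single_apply]⟩
  have he3M : Pi.single (2 : Fin 3) (1:ℚ) ∈ M := by
    rw [hM]; exact ⟨he3, fun i => by fin_cases i <;> simp [Pi.single_apply]⟩
  have hv2ne : v₂ ≠ 0 := by
    intro h; have := congrFun h 0; rw [hv₂] at this; norm_num at this
  have hv4ne : v₄ ≠ 0 := by
    intro h; have := congrFun h 0; rw [hv₄] at this; norm_num at this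
  have hv8ne : v₈ ≠ 0 := by
    intro h; have := congrFun h 0; rw [hv₈] at this; norm_num at this
  have he1ne : (Pi.single 0 1 : Fin 3 → ℚ) ≠ 0 := by
    intro h; have := congrFun h 0; simp at this
  have he2ne : (Pi.single 1 1 : Fin 3 → ℚ) ≠ 0 := by
    intro h; have := congrFun h 1; simp at this
  have he3ne : (Pi.single 2 1 : Fin 3 → ℚ) ≠ 0 := by
    intro h; have := congrFun h 2; simp at this
  have h624 : v₆ = v₂ + v₄ := by
    funext i; fin_cases i <;> simp [hv₂, hv₄, hv₆] <;> norm_num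
  have h1028 : v₁₀ = v₂ + v₈ := by
    funext i; fin_cases i <;> simp [hv₂, hv₈, hv₁₀] <;> norm_num
  have h1248 : v₁₂ = v₄ + v₈ := by
    funext i; fin_cases i <;> simp [hv₄, hv₈, hv₁₂] <;> norm_num
  refine ⟨hv2M, hv4M, hv6M, hv8M, hv10M, hv12M, h624, h1028, h1248, ?_⟩
  intro x hx
  have hdec : ∃ y ∈ M, ∃ z ∈ M, y ≠ 0 ∧ z ≠ 0 ∧ x = y + z := by
    rcases hx with h | h | h | h | h | h
    · exact ⟨v₂, hv2M, v₄, hv4M, hv2ne, hv4ne, h ▸ h624⟩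
    · exact ⟨v₂, hv2M, v₈, hv8M, hv2ne, hv8ne, h ▸ h1028⟩
    · exact ⟨v₄, hv4M, v₈, hv8M, hv4ne, hv8ne, h ▸ h1248⟩
    · exact ⟨(Pi.single 0 1 : Fin 3 → ℚ), he1M, v₄, hv4M, he1ne, hv4ne, h⟩
    · exact ⟨(Pi.single 1 1 : Fin 3 → ℚ), he2M, v₂, hv2M, he2ne, hv2ne, h⟩
    · exact ⟨(Pi.single 2 1 : Fin 3 → ℚ), he3M, v₈, hv8M, he3ne, hv8ne, h⟩
  exact ⟨hdec, fun hmem => hmem.2.2 hdec⟩
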